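/- Let q ≥ 2 and n ≥ 3 be integers and let a = a_1 a_2 … a_n ∈ C_{q,n}. For 1 ≤ i ≤ n−2 set t_i = 1 if a_i = a_{i+2} and t_i = 0 otherwise, and for 1 ≤ i ≤ n−3 set s_i = 1 if a_i = a_{i+3} and s_i = 0 otherwise. Then, as an equality of integers, |H_2(a)| = 3(q−2)^2 + 2 + (n−3)·((q−2)(q−3)+2) − 2·Σ_{i=1}^{n−2} t_i − Σ_{i=1}^{n−3} s_i + (q−2)·( Σ_{i=2}^{n−2} (q−3+t_i) + Σ_{i=1}^{n−3} (q−3+t_i) ) + Σ_{i=1}^{n−4} ( (q−3+t_i) · Σ_{j=i+2}^{n−2} (q−3+t_j) ). -/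

import Mathlib

open scoped Classical

/-- A sequence `a` of length `n` over an alphabet of size `q` is homopolymer free (HF)
if no two consecutive symbols are equal. -/
def isHF {q n : ℕ} (a : Fin n → Fin q) : Prop :=
  ∀ i : ℕ, ∀ h : i + 1 < n, a ⟨i, by omega⟩ ≠ a ⟨i + 1, h⟩

/-- `HFset q n` is the set `C_{q,n}` of all HF sequences of length `n`. -/
noncomputable def HFset (q n : ℕ) : Finset (Fin n → Fin q) :=
  Finset.univ.filter isHF

/-- The HF sphere `H_r(a)`: all HF sequences at Hamming distance exactly `r` from `a`. -/
noncomputable def HFsphere {q n : ℕ} (a : Fin n → Fin q) (r : ℕ) :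
    Finset (Fin n → Fin q) :=
  (HFset q n).filter (fun z => hammingDist a z = r)

/-- Indicator (in ℤ) of the event `a_i = a_{i+2}` (1-indexed): `t_i`. -/
noncomputable def tval {q n : ℕ} (a : Fin n → Fin q) (i : ℕ) : ℤ :=
  if ∃ h : 1 ≤ i ∧ i + 1 < n, a ⟨i - 1, by omega⟩ = a ⟨i + 1, h.2⟩ then 1 else 0

/-- Indicator (in ℤ) of the event `a_i = a_{i+3}` (1-indexed): `s_i`. -/
noncomputable def sval {q n : ℕ} (a : Fin n → Fin q) (i : ℕ) : ℤ :=
  if ∃ h : 1 ≤ i ∧ i + 2 < n, a ⟨i - 1, by omega⟩ = a ⟨i + 2, h.2⟩ then 1 else 0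


section Aux
variable {q n : ℕ}

lemma aext (a : Fin n → Fin q) {k l : ℕ} (hk : k < n) (hl : l < n) (h : k = l) :
    a ⟨k, hk⟩ = a ⟨l, hl⟩ := by subst h; rfl

lemma ane {a : Fin n → Fin q} (ha : isHF a) {k l : ℕ} (hk : k < n) (hl : l < n)
    (h : k + 1 = l) : a ⟨k, hk⟩ ≠ a ⟨l, hl⟩ := by
  rw [aext a hl (show k + 1 < n by omega) h.symm]
  exact ha k (by omega)

lemma tval_eq (a : Fin n → Fin q) {i : ℕ} (h1 : 1 ≤ i) (h2 : i + 1 < n) :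
    tval a i = if a ⟨i - 1, by omega⟩ = a ⟨i + 1, h2⟩ then 1 else 0 := by
  have hiff : (∃ h : 1 ≤ i ∧ i + 1 < n, a ⟨i - 1, by omega⟩ = a ⟨i + 1, h.2⟩) ↔
      a ⟨i - 1, by omega⟩ = a ⟨i + 1, h2⟩ := ⟨fun ⟨_, e⟩ => e, fun e => ⟨⟨h1, h2⟩, e⟩⟩
  rw [tval, if_congr hiff rfl rfl]

lemma tval_eq' (a : Fin n → Fin q) {i k l : ℕ} (h1 : 1 ≤ i) (h2 : i + 1 < n)
    (hk : k < n) (hl : l < n) (ek : k = i - 1) (el : l = i + 1) :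
    tval a i = if a ⟨k, hk⟩ = a ⟨l, hl⟩ then 1 else 0 := by
  subst ek el; exact tval_eq a h1 h2

lemma sval_eq' (a : Fin n → Fin q) {i k l : ℕ} (h1 : 1 ≤ i) (h2 : i + 2 < n)
    (hk : k < n) (hl : l < n) (ek : k = i - 1) (el : l = i + 2) :
    sval a i = if a ⟨k, hk⟩ = a ⟨l, hl⟩ then 1 else 0 := by
  subst ek el
  have hiff : (∃ h : 1 ≤ i ∧ i + 2 < n, a ⟨i - 1, by omega⟩ = a ⟨i + 2, h.2⟩) ↔
      a ⟨i - 1, hk⟩ = a ⟨i + 2, hl⟩ := ⟨fun ⟨_, e⟩ => e, fun e => ⟨⟨h1, h2⟩, e⟩⟩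
  rw [sval, if_congr hiff rfl rfl]

lemma compl_card_int (S : Finset (Fin q)) : ((Sᶜ).card : ℤ) = q - S.card := by
  rw [Finset.card_compl, Fintype.card_fin]
  have := Finset.card_le_univ S
  simp only [Finset.card_univ, Fintype.card_fin] at this
  omega

lemma card2 (u v : Fin q) (h : u ≠ v) : (({u, v} : Finset (Fin q)).card : ℤ) = 2 := by
  rw [Finset.card_insert_of_notMem (by simp [h]), Finset.card_singleton]
  norm_num

lemma card3 (u v w : Fin q) (huv : u ≠ v) (hvw : v ≠ w) :
    (({u, v, w} : Finset (Fin q)).card : ℤ) = 3 - (if u = w then 1 else 0) := by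
  by_cases h : u = w
  · subst h
    rw [if_pos rfl, show ({u, v, u} : Finset (Fin q)) = {u, v} by ext t; simp; try tauto,
      card2 u v huv]
    norm_num
  · rw [if_neg h, Finset.card_insert_of_notMem (by simp [huv, h]),
      Finset.card_insert_of_notMem (by simp [hvw]), Finset.card_singleton]
    norm_num

lemma card4 (u v w z : Fin q) (huv : u ≠ v) (hvw : v ≠ w) (hwz : w ≠ z) :
    (({u, v, w, z} : Finset (Fin q)).card : ℤ) =
      4 - (if u = w then 1 else 0) - (if v = z then 1 else 0) - (if u = z then 1 else 0) := by
  by_cases h1 : u = w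
  · have h3 : u ≠ z := fun e => hwz (h1 ▸ e)
    by_cases h2 : v = z
    · subst h1 h2
      rw [if_pos rfl, if_pos rfl, if_neg h3,
        show ({u, v, u, v} : Finset (Fin q)) = {u, v} by ext t; simp; try tauto, card2 u v huv]
      norm_num
    · subst h1
      rw [if_pos rfl, if_neg h2, if_neg h3,
        show ({u, v, u, z} : Finset (Fin q)) = {u, v, z} by ext t; simp; try tauto,
        card3 u v z huv (fun e => h2 e)]
      by_cases h4 : u = z <;> simp [h4] <;> omega
  · by_cases h2 : v = z
    · have h4 : u ≠ z := fun e => huv (e.trans h2.symm)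
      subst h2
      rw [if_neg h1, if_pos rfl, if_neg h4,
        show ({u, v, w, v} : Finset (Fin q)) = {u, v, w} by ext t; simp; try tauto,
        card3 u v w huv hvw, if_neg h1]
      norm_num
    · by_cases h3 : u = z
      · subst h3
        rw [if_neg h1, if_neg h2, if_pos rfl,
          show ({u, v, w, u} : Finset (Fin q)) = {u, v, w} by ext t; simp; try tauto,
          card3 u v w huv hvw, if_neg h1]
        norm_num
      · rw [if_neg h1, if_neg h2, if_neg h3,
          Finset.card_insert_of_notMem (by simp [huv, h1, h3]),
          Finset.card_insert_of_notMem (by simp [hvw, h2]),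
          Finset.card_insert_of_notMem (by simp [hwz]), Finset.card_singleton]
        norm_num

lemma update2_apply' (a : Fin n → Fin q) {i j : ℕ} (hi : i < n) (hj : j < n)
    (x y : Fin q) (k : Fin n) :
    Function.update (Function.update a ⟨i, hi⟩ x) ⟨j, hj⟩ y k =
      if (k : ℕ) = j then y else if (k : ℕ) = i then x else a k := by
  simp [Function.update_apply, Fin.ext_iff]

end Aux

section Char
variable {q n : ℕ}

lemma isHF_up_nonadj {a : Fin n → Fin q} (ha : isHF a) {i j : ℕ} (hij : i + 2 ≤ j)
    (hj : j < n) (x y : Fin q) :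
    isHF (Function.update (Function.update a ⟨i, by omega⟩ x) ⟨j, hj⟩ y) ↔
      ((∀ h : 1 ≤ i, x ≠ a ⟨i - 1, by omega⟩) ∧ x ≠ a ⟨i + 1, by omega⟩ ∧
        y ≠ a ⟨j - 1, by omega⟩ ∧ (∀ h : j + 1 < n, y ≠ a ⟨j + 1, h⟩)) := by
  have hi : i < n := by omega
  constructor
  · intro H
    refine ⟨fun h1 => ?_, ?_, ?_, fun h4 => ?_⟩
    · have := H (i - 1) (by omega)
      rw [update2_apply', update2_apply'] at this
      rw [if_neg (by simp only [Fin.val_mk]; omega), if_neg (by simp only [Fin.val_mk]; omega), if_neg (by simp only [Fin.val_mk]; omega),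
        if_pos (by simp only [Fin.val_mk]; omega)] at this
      exact this.symm
    · have := H i (by omega)
      rw [update2_apply', update2_apply'] at this
      rw [if_neg (by simp only [Fin.val_mk]; omega), if_pos (by simp only [Fin.val_mk]), if_neg (by simp only [Fin.val_mk]; omega),
        if_neg (by simp only [Fin.val_mk]; omega)] at this
      exact this
    · have := H (j - 1) (by omega)
      rw [update2_apply', update2_apply'] at this
      rw [if_neg (by simp only [Fin.val_mk]; omega), if_neg (by simp only [Fin.val_mk]; omega), if_pos (by simp only [Fin.val_mk]; omega)] at this
      exact this.symm
    · have := H j (by omega)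
      rw [update2_apply', update2_apply'] at this
      rw [if_pos (by simp only [Fin.val_mk]), if_neg (by simp only [Fin.val_mk]; omega), if_neg (by simp only [Fin.val_mk]; omega)] at this
      exact this
  · rintro ⟨h1, h2, h3, h4⟩ m hm
    rw [show (⟨m, by omega⟩ : Fin n) = ⟨m, by omega⟩ from rfl]
    rw [update2_apply', update2_apply']
    simp only [Fin.val_mk]
    by_cases c1 : m = j
    · subst c1
      rw [if_pos rfl, if_neg (by omega), if_neg (by omega)]
      exact fun e => h4 hm (e.trans (aext a _ _ rfl))
    · by_cases c2 : m = i
      · subst c2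
        rw [if_neg c1, if_pos rfl, if_neg (by omega), if_neg (by omega)]
        exact fun e => h2 (e.trans (aext a _ _ rfl))
      · rw [if_neg c1, if_neg c2]
        by_cases c3 : m + 1 = j
        · rw [if_pos c3]
          exact fun e => h3 (((aext a _ _ (show j - 1 = m by omega)).trans e).symm)
        · by_cases c4 : m + 1 = i
          · rw [if_neg c3, if_pos c4]
            exact fun e => h1 (by omega) (((aext a _ _ (show i - 1 = m by omega)).trans e).symm)
          · rw [if_neg c3, if_neg c4]
            exact ha m hm

end Char

section Char2
variable {q n : ℕ}

lemma isHF_up_adj {a : Fin n → Fin q} (ha : isHF a) {i : ℕ} (hj : i + 1 < n) (x y : Fin q) :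
    isHF (Function.update (Function.update a ⟨i, by omega⟩ x) ⟨i + 1, hj⟩ y) ↔
      ((∀ h : 1 ≤ i, x ≠ a ⟨i - 1, by omega⟩) ∧ x ≠ y ∧
        (∀ h : i + 2 < n, y ≠ a ⟨i + 2, h⟩)) := by
  have hi : i < n := by omega
  constructor
  · intro H
    refine ⟨fun h1 => ?_, ?_, fun h4 => ?_⟩
    · have := H (i - 1) (by omega)
      rw [update2_apply', update2_apply'] at this
      rw [if_neg (by simp only [Fin.val_mk]; omega), if_neg (by simp only [Fin.val_mk]; omega),
        if_neg (by simp only [Fin.val_mk]; omega), if_pos (by simp only [Fin.val_mk]; omega)] at this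
      exact this.symm
    · have := H i (by omega)
      rw [update2_apply', update2_apply'] at this
      rw [if_neg (by simp only [Fin.val_mk]; omega), if_pos (by simp only [Fin.val_mk]),
        if_pos (by simp only [Fin.val_mk])] at this
      exact this
    · have := H (i + 1) (by omega)
      rw [update2_apply', update2_apply'] at this
      rw [if_pos (by simp only [Fin.val_mk]), if_neg (by simp only [Fin.val_mk]; omega),
        if_neg (by simp only [Fin.val_mk]; omega)] at this
      exact this
  · rintro ⟨h1, h2, h4⟩ m hm
    rw [update2_apply', update2_apply']
    simp only [Fin.val_mk]
    by_cases c1 : m = i + 1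
    · subst c1
      rw [if_pos rfl, if_neg (by omega), if_neg (by omega)]
      exact fun e => h4 hm (e.trans (aext a _ _ (by omega)))
    · by_cases c2 : m = i
      · subst c2
        rw [if_neg c1, if_pos rfl, if_pos (by omega)]
        exact h2
      · rw [if_neg c1, if_neg c2]
        by_cases c3 : m + 1 = i + 1
        · omega
        · by_cases c4 : m + 1 = i
          · rw [if_neg c3, if_pos c4]
            exact fun e => h1 (by omega) (((aext a _ _ (show i - 1 = m by omega)).trans e).symm)
          · rw [if_neg c3, if_neg c4]
            exact ha m hm

end Char2

section Fib
variable {q n : ℕ}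

noncomputable def fib (a : Fin n → Fin q) (i j : ℕ) : Finset (Fin n → Fin q) :=
  (HFsphere a 2).filter (fun z => ∀ k : Fin n, z k ≠ a k ↔ ((k : ℕ) = i ∨ (k : ℕ) = j))

lemma fib_unique {a : Fin n → Fin q} {i j i' j' : ℕ} (hij : i < j) (hj : j < n)
    (hij' : i' < j') (hj' : j' < n) {z : Fin n → Fin q}
    (h1 : z ∈ fib a i j) (h2 : z ∈ fib a i' j') : i = i' ∧ j = j' := by
  have P := (Finset.mem_filter.mp h1).2
  have P' := (Finset.mem_filter.mp h2).2
  have Hi : z ⟨i, by omega⟩ ≠ a ⟨i, by omega⟩ := (P ⟨i, by omega⟩).mpr (by simp)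
  have Hj : z ⟨j, hj⟩ ≠ a ⟨j, hj⟩ := (P ⟨j, hj⟩).mpr (by simp)
  have Hi' : z ⟨i', by omega⟩ ≠ a ⟨i', by omega⟩ := (P' ⟨i', by omega⟩).mpr (by simp)
  have Hj' : z ⟨j', hj'⟩ ≠ a ⟨j', hj'⟩ := (P' ⟨j', hj'⟩).mpr (by simp)
  have e1 : i = i' ∨ i = j' := by simpa using (P' ⟨i, by omega⟩).mp Hi
  have e2 : j = i' ∨ j = j' := by simpa using (P' ⟨j, hj⟩).mp Hj
  have e3 : i' = i ∨ i' = j := by simpa using (P ⟨i', by omega⟩).mp Hi'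
  have e4 : j' = i ∨ j' = j := by simpa using (P ⟨j', hj'⟩).mp Hj'
  omega

lemma sphere_decomp (a : Fin n → Fin q) :
    HFsphere a 2 = (Finset.range n).biUnion
      (fun i => (Finset.Ico (i + 1) n).biUnion (fun j => fib a i j)) := by
  ext z
  simp only [Finset.mem_biUnion, Finset.mem_range, Finset.mem_Ico]
  constructor
  · intro hz
    have hd : (Finset.univ.filter (fun k => a k ≠ z k)).card = 2 :=
      (Finset.mem_filter.mp hz).2
    obtain ⟨u, v, huv, hD⟩ := Finset.card_eq_two.mp hd
    have key : ∀ u v : Fin n, u < v →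
        Finset.univ.filter (fun k => a k ≠ z k) = {u, v} →
        ∃ i < n, ∃ j, (i + 1 ≤ j ∧ j < n) ∧ z ∈ fib a i j := by
      intro u v huv hD
      refine ⟨(u : ℕ), u.isLt, (v : ℕ), ⟨huv, v.isLt⟩, ?_⟩
      refine Finset.mem_filter.mpr ⟨hz, fun k => ?_⟩
      have : (a k ≠ z k) ↔ k ∈ ({u, v} : Finset (Fin n)) := by
        rw [← hD]; simp
      rw [ne_comm, this]
      simp [Fin.ext_iff]
    rcases huv.lt_or_gt with h | h
    · exact key u v h hD
    · exact key v u h (hD.trans (Finset.pair_comm u v))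
  · rintro ⟨i, hi, j, hj, hz⟩
    exact (Finset.mem_filter.mp hz).1

lemma sphere_card_eq (a : Fin n → Fin q) :
    ((HFsphere a 2).card : ℤ) =
      ∑ i ∈ Finset.range n, ∑ j ∈ Finset.Ico (i + 1) n, ((fib a i j).card : ℤ) := by
  rw [sphere_decomp a, Finset.card_biUnion]
  · push_cast
    refine Finset.sum_congr rfl fun i hi => ?_
    rw [Finset.card_biUnion]
    · push_cast; rfl
    · intro x hx y hy hxy
      rw [Function.onFun, Finset.disjoint_left]
      intro z hzx hzy
      simp only [Finset.mem_coe, Finset.mem_Ico] at hx hy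
      exact hxy (fib_unique (by omega) (by omega) (by omega) (by omega) hzx hzy).2
  · intro x hx y hy hxy
    rw [Function.onFun, Finset.disjoint_left]
    intro z hzx hzy
    simp only [Finset.mem_biUnion, Finset.mem_Ico] at hzx hzy
    obtain ⟨j1, hj1, hz1⟩ := hzx
    obtain ⟨j2, hj2, hz2⟩ := hzy
    exact hxy (fib_unique (by omega) (by omega) (by omega) (by omega) hz1 hz2).1

end Fib

section FibCard
variable {q n : ℕ}

lemma mem_HFset_iff {a : Fin n → Fin q} : a ∈ HFset q n ↔ isHF a := by
  simp [HFset]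

lemma fib_recon {a : Fin n → Fin q} {i j : ℕ} (hij : i < j) (hj : j < n)
    {z : Fin n → Fin q} (hz : z ∈ fib a i j) :
    Function.update (Function.update a ⟨i, by omega⟩ (z ⟨i, by omega⟩)) ⟨j, hj⟩ (z ⟨j, hj⟩)
      = z := by
  have P := (Finset.mem_filter.mp hz).2
  funext k
  rw [update2_apply']
  by_cases c1 : (k : ℕ) = j
  · rw [if_pos c1]
    exact congrArg z (Fin.ext c1.symm)
  · by_cases c2 : (k : ℕ) = i
    · rw [if_neg c1, if_pos c2]
      exact congrArg z (Fin.ext c2.symm)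
    · rw [if_neg c1, if_neg c2]
      have := (P k).mp
      by_contra hne
      exact (by tauto : ¬ ((k:ℕ) = i ∨ (k:ℕ) = j)) (this (fun e => hne e.symm))

lemma fib_card {a : Fin n → Fin q} (ha : isHF a) {i j : ℕ} (hij : i < j) (hj : j < n) :
    ((fib a i j).card : ℤ) = ((Finset.univ.filter (fun w : Fin q × Fin q =>
      w.1 ≠ a ⟨i, by omega⟩ ∧ w.2 ≠ a ⟨j, hj⟩ ∧
      isHF (Function.update (Function.update a ⟨i, by omega⟩ w.1) ⟨j, hj⟩ w.2))).card : ℤ) := by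
  have hi : i < n := by omega
  congr 1
  refine Finset.card_bij' (fun z _ => (z ⟨i, hi⟩, z ⟨j, hj⟩))
    (fun w _ => Function.update (Function.update a ⟨i, hi⟩ w.1) ⟨j, hj⟩ w.2)
    ?_ ?_ ?_ ?_
  · -- forward membership
    intro z hz
    have P := (Finset.mem_filter.mp hz).2
    have hzHF : isHF z := mem_HFset_iff.mp (Finset.mem_filter.mp (Finset.mem_filter.mp hz).1).1
    refine Finset.mem_filter.mpr ⟨Finset.mem_univ _, ?_, ?_, ?_⟩
    · exact (P ⟨i, hi⟩).mpr (by simp)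
    · exact (P ⟨j, hj⟩).mpr (by simp)
    · rw [fib_recon hij hj hz]; exact hzHF
  · -- backward membership
    intro w hw
    obtain ⟨-, hw1, hw2, hwHF⟩ := Finset.mem_filter.mp hw
    set f := Function.update (Function.update a ⟨i, hi⟩ w.1) ⟨j, hj⟩ w.2 with hf
    have key : ∀ k : Fin n, f k ≠ a k ↔ ((k : ℕ) = i ∨ (k : ℕ) = j) := by
      intro k
      rw [hf, update2_apply']
      by_cases c1 : (k : ℕ) = j
      · have : a k = a ⟨j, hj⟩ := congrArg a (Fin.ext c1)
        rw [if_pos c1, this]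
        simp [c1, hw2]
      · by_cases c2 : (k : ℕ) = i
        · have : a k = a ⟨i, hi⟩ := congrArg a (Fin.ext c2)
          rw [if_neg c1, if_pos c2, this]
          simp [c1, c2, hw1]
        · rw [if_neg c1, if_neg c2]
          simp [c1, c2]
    refine Finset.mem_filter.mpr ⟨Finset.mem_filter.mpr ⟨mem_HFset_iff.mpr hwHF, ?_⟩, key⟩
    show (Finset.univ.filter (fun k => a k ≠ f k)).card = 2
    have : Finset.univ.filter (fun k => a k ≠ f k) =
        ({⟨i, hi⟩, ⟨j, hj⟩} : Finset (Fin n)) := by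
      ext k
      simp only [Finset.mem_filter, Finset.mem_univ, true_and, Finset.mem_insert,
        Finset.mem_singleton, Fin.ext_iff]
      rw [ne_comm, key k]
    rw [this, Finset.card_insert_of_notMem (by simp [Fin.ext_iff]; omega),
      Finset.card_singleton]
  · intro z hz
    exact fib_recon hij hj hz
  · intro w hw
    have h1 : Function.update (Function.update a ⟨i, hi⟩ w.1) ⟨j, hj⟩ w.2 ⟨i, hi⟩ = w.1 := by
      rw [update2_apply']; simp only [Fin.val_mk]; rw [if_neg (by omega)]; simp
    have h2 : Function.update (Function.update a ⟨i, hi⟩ w.1) ⟨j, hj⟩ w.2 ⟨j, hj⟩ = w.2 := by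
      rw [update2_apply']; simp
    show (Function.update (Function.update a ⟨i, hi⟩ w.1) ⟨j, hj⟩ w.2 ⟨i, hi⟩,
      Function.update (Function.update a ⟨i, hi⟩ w.1) ⟨j, hj⟩ w.2 ⟨j, hj⟩) = w
    rw [h1, h2]

end FibCard

section Cset
variable {q n : ℕ}

noncomputable def cset (a : Fin n → Fin q) (k : ℕ) : Finset (Fin q) :=
  Finset.univ.filter (fun x => ∀ hk : k < n,
    x ≠ a ⟨k, hk⟩ ∧ (∀ h : k + 1 < n, x ≠ a ⟨k + 1, h⟩) ∧
      (∀ h : 1 ≤ k, x ≠ a ⟨k - 1, by omega⟩))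

lemma mem_cset {a : Fin n → Fin q} {k : ℕ} (hk : k < n) {x : Fin q} :
    x ∈ cset a k ↔ (x ≠ a ⟨k, hk⟩ ∧ (∀ h : k + 1 < n, x ≠ a ⟨k + 1, h⟩) ∧
      (∀ h : 1 ≤ k, x ≠ a ⟨k - 1, by omega⟩)) := by
  rw [cset, Finset.mem_filter]
  exact ⟨fun H => H.2 hk, fun H => ⟨Finset.mem_univ _, fun _ => H⟩⟩

lemma fib_card_nonadj {a : Fin n → Fin q} (ha : isHF a) {i j : ℕ} (hij : i + 2 ≤ j)
    (hj : j < n) :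
    ((fib a i j).card : ℤ) = ((cset a i).card : ℤ) * ((cset a j).card : ℤ) := by
  rw [fib_card ha (by omega) hj, ← Nat.cast_mul, ← Finset.card_product]
  congr 2
  ext w
  simp only [Finset.mem_filter, Finset.mem_univ, true_and, Finset.mem_product]
  rw [isHF_up_nonadj ha hij hj, mem_cset (show i < n by omega), mem_cset hj]
  constructor
  · rintro ⟨hx, hy, hA, hB, hC, hD⟩
    exact ⟨⟨hx, fun _ => hB, hA⟩, hy, hD, fun _ => hC⟩
  · rintro ⟨⟨hx, hB, hA⟩, hy, hD, hC⟩
    exact ⟨hx, hy, hA, hB (by omega), hC (by omega), hD⟩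

lemma cset_card_zero {a : Fin n → Fin q} (ha : isHF a) (hn : 2 ≤ n) :
    ((cset a 0).card : ℤ) = (q : ℤ) - 2 := by
  have h1 : (1 : ℕ) < n := by omega
  have h0 : (0 : ℕ) < n := by omega
  have : cset a 0 = ({a ⟨0, h0⟩, a ⟨1, h1⟩} : Finset (Fin q))ᶜ := by
    ext x
    rw [mem_cset h0]
    simp only [Finset.mem_compl, Finset.mem_insert, Finset.mem_singleton]
    constructor
    · rintro ⟨hA, hB, -⟩
      push_neg
      exact ⟨hA, hB h1⟩
    · intro h
      push_neg at h
      exact ⟨h.1, fun _ => h.2, fun h' => absurd h' (by omega)⟩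
  rw [this, compl_card_int, card2 _ _ (ane ha h0 h1 rfl)]

lemma cset_card_last {a : Fin n → Fin q} (ha : isHF a) (hn : 2 ≤ n) :
    ((cset a (n - 1)).card : ℤ) = (q : ℤ) - 2 := by
  have h1 : n - 1 < n := by omega
  have h0 : n - 1 - 1 < n := by omega
  have : cset a (n - 1) = ({a ⟨n - 1 - 1, h0⟩, a ⟨n - 1, h1⟩} : Finset (Fin q))ᶜ := by
    ext x
    rw [mem_cset h1]
    simp only [Finset.mem_compl, Finset.mem_insert, Finset.mem_singleton]
    constructor
    · rintro ⟨hA, -, hC⟩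
      push_neg
      exact ⟨hC (by omega), hA⟩
    · intro h
      push_neg at h
      exact ⟨h.2, fun h' => absurd h' (by omega), fun _ => h.1⟩
  rw [this, compl_card_int, card2 _ _ (ane ha h0 h1 (by omega))]

lemma cset_card_mid {a : Fin n → Fin q} (ha : isHF a) {k : ℕ} (h1 : 1 ≤ k)
    (h2 : k + 1 < n) :
    ((cset a k).card : ℤ) = (q : ℤ) - 3 + tval a k := by
  have hk : k < n := by omega
  have hm : k - 1 < n := by omega
  have : cset a k = ({a ⟨k - 1, hm⟩, a ⟨k, hk⟩, a ⟨k + 1, h2⟩} : Finset (Fin q))ᶜ := by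
    ext x
    rw [mem_cset hk]
    simp only [Finset.mem_compl, Finset.mem_insert, Finset.mem_singleton]
    constructor
    · rintro ⟨hA, hB, hC⟩
      push_neg
      exact ⟨hC h1, hA, hB h2⟩
    · intro h
      push_neg at h
      exact ⟨h.2.1, fun _ => h.2.2, fun _ => h.1⟩
  rw [this, compl_card_int, card3 _ _ _ (ane ha hm hk (by omega)) (ane ha hk h2 rfl),
    tval_eq' a h1 h2 hm h2 rfl rfl]
  ring
end Cset

section Adj
variable {q n : ℕ}

lemma count_pairs (X Y : Finset (Fin q)) :
    (((Finset.univ : Finset (Fin q × Fin q)).filter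
        (fun w => w.1 ∈ X ∧ w.2 ∈ Y ∧ w.1 ≠ w.2)).card : ℤ)
      = (X.card : ℤ) * (Y.card : ℤ) - ((X ∩ Y).card : ℤ) := by
  have h1 : (Finset.univ : Finset (Fin q × Fin q)).filter
      (fun w => w.1 ∈ X ∧ w.2 ∈ Y ∧ w.1 ≠ w.2)
      = (X ×ˢ Y).filter (fun w => ¬ (w.1 = w.2)) := by
    ext w
    simp only [Finset.mem_filter, Finset.mem_univ, true_and, Finset.mem_product]
    tauto
  have h2 : ((X ×ˢ Y).filter (fun w => w.1 = w.2)).card = (X ∩ Y).card := by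
    refine Finset.card_bij' (fun w _ => w.1) (fun x _ => (x, x)) ?_ ?_ ?_ ?_
    · intro w hw
      simp only [Finset.mem_filter, Finset.mem_product] at hw
      simp only [Finset.mem_inter]
      exact ⟨hw.1.1, hw.2 ▸ hw.1.2⟩
    · intro x hx
      simp only [Finset.mem_inter] at hx
      simp only [Finset.mem_filter, Finset.mem_product]
      exact ⟨⟨hx.1, hx.2⟩, trivial⟩
    · intro w hw
      simp only [Finset.mem_filter, Finset.mem_product] at hw
      show (w.1, w.1) = w
      exact Prod.ext rfl hw.2
    · intro x hx
      rfl
  have h3 := Finset.card_filter_add_card_filter_not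
    (s := X ×ˢ Y) (p := fun w => w.1 = w.2)
  rw [Finset.card_product] at h3
  rw [h1]
  push_cast
  rw [← h2] at *
  omega

lemma fib_card_adj {a : Fin n → Fin q} (ha : isHF a) {i : ℕ} (hj : i + 1 < n) :
    ((fib a i (i + 1)).card : ℤ) =
      ((Finset.univ.filter (fun x : Fin q =>
          x ≠ a ⟨i, by omega⟩ ∧ ∀ h : 1 ≤ i, x ≠ a ⟨i - 1, by omega⟩)).card : ℤ)
        * ((Finset.univ.filter (fun y : Fin q =>
          y ≠ a ⟨i + 1, hj⟩ ∧ ∀ h : i + 2 < n, y ≠ a ⟨i + 2, h⟩)).card : ℤ)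
      - (((Finset.univ.filter (fun x : Fin q =>
          x ≠ a ⟨i, by omega⟩ ∧ ∀ h : 1 ≤ i, x ≠ a ⟨i - 1, by omega⟩))
          ∩ (Finset.univ.filter (fun y : Fin q =>
          y ≠ a ⟨i + 1, hj⟩ ∧ ∀ h : i + 2 < n, y ≠ a ⟨i + 2, h⟩))).card : ℤ) := by
  rw [fib_card ha (by omega) hj, ← count_pairs]
  congr 2
  ext w
  simp only [Finset.mem_filter, Finset.mem_univ, true_and]
  rw [isHF_up_adj ha hj]
  constructor
  · rintro ⟨hx, hy, hA, hB, hC⟩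
    exact ⟨⟨hx, hA⟩, ⟨hy, hC⟩, hB⟩
  · rintro ⟨⟨hx, hA⟩, ⟨hy, hC⟩, hB⟩
    exact ⟨hx, hy, hA, hB, hC⟩

end Adj

section AdjCases
variable {q n : ℕ}

lemma fib_adj_left {a : Fin n → Fin q} (ha : isHF a) (hn : 3 ≤ n) :
    ((fib a 0 (0 + 1)).card : ℤ) =
      ((q : ℤ) - 1) * ((q : ℤ) - 2) - ((q : ℤ) - 3 + tval a (0 + 1)) := by
  have hj : (0 : ℕ) + 1 < n := by omega
  have h0 : (0 : ℕ) < n := by omega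
  have h2 : (0 : ℕ) + 2 < n := by omega
  rw [fib_card_adj ha hj]
  have hX : (Finset.univ.filter (fun x : Fin q =>
      x ≠ a ⟨0, by omega⟩ ∧ ∀ h : 1 ≤ 0, x ≠ a ⟨0 - 1, by omega⟩)) =
      ({a ⟨0, h0⟩} : Finset (Fin q))ᶜ := by
    ext x
    simp only [Finset.mem_filter, Finset.mem_univ, true_and, Finset.mem_compl,
      Finset.mem_singleton]
    exact ⟨fun h => h.1, fun h => ⟨h, fun h' => absurd h' (by omega)⟩⟩
  have hY : (Finset.univ.filter (fun y : Fin q =>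
      y ≠ a ⟨0 + 1, hj⟩ ∧ ∀ h : 0 + 2 < n, y ≠ a ⟨0 + 2, h⟩)) =
      ({a ⟨0 + 1, hj⟩, a ⟨0 + 2, h2⟩} : Finset (Fin q))ᶜ := by
    ext x
    simp only [Finset.mem_filter, Finset.mem_univ, true_and, Finset.mem_compl,
      Finset.mem_insert, Finset.mem_singleton]
    constructor
    · rintro ⟨hA, hB⟩; push_neg; exact ⟨hA, hB h2⟩
    · intro h; push_neg at h; exact ⟨h.1, fun _ => h.2⟩
  have hI : (Finset.univ.filter (fun x : Fin q =>
      x ≠ a ⟨0, by omega⟩ ∧ ∀ h : 1 ≤ 0, x ≠ a ⟨0 - 1, by omega⟩)) ∩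
      (Finset.univ.filter (fun y : Fin q =>
      y ≠ a ⟨0 + 1, hj⟩ ∧ ∀ h : 0 + 2 < n, y ≠ a ⟨0 + 2, h⟩)) =
      ({a ⟨0, h0⟩, a ⟨0 + 1, hj⟩, a ⟨0 + 2, h2⟩} : Finset (Fin q))ᶜ := by
    rw [hX, hY]
    ext t
    simp only [Finset.mem_inter, Finset.mem_compl, Finset.mem_insert, Finset.mem_singleton]
    tauto
  rw [hI, hX, hY, compl_card_int, compl_card_int, compl_card_int,
    Finset.card_singleton, card2 _ _ (ane ha hj h2 (by omega)),
    card3 _ _ _ (ane ha h0 hj (by omega)) (ane ha hj h2 (by omega)),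
    tval_eq' a (i := 0 + 1) (by omega) (by omega) h0 h2 (by omega) (by omega)]
  push_cast
  ring

lemma fib_adj_mid {a : Fin n → Fin q} (ha : isHF a) {i : ℕ} (h1 : 1 ≤ i)
    (h2 : i + 2 < n) :
    ((fib a i (i + 1)).card : ℤ) =
      ((q : ℤ) - 2) * ((q : ℤ) - 2)
        - ((q : ℤ) - 4 + tval a i + tval a (i + 1) + sval a i) := by
  have hj : i + 1 < n := by omega
  have hi : i < n := by omega
  have hm : i - 1 < n := by omega
  rw [fib_card_adj ha hj]
  have hX : (Finset.univ.filter (fun x : Fin q =>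
      x ≠ a ⟨i, by omega⟩ ∧ ∀ h : 1 ≤ i, x ≠ a ⟨i - 1, by omega⟩)) =
      ({a ⟨i - 1, hm⟩, a ⟨i, hi⟩} : Finset (Fin q))ᶜ := by
    ext x
    simp only [Finset.mem_filter, Finset.mem_univ, true_and, Finset.mem_compl,
      Finset.mem_insert, Finset.mem_singleton]
    constructor
    · rintro ⟨hA, hB⟩; push_neg; exact ⟨hB h1, hA⟩
    · intro h; push_neg at h; exact ⟨h.2, fun _ => h.1⟩
  have hY : (Finset.univ.filter (fun y : Fin q =>
      y ≠ a ⟨i + 1, hj⟩ ∧ ∀ h : i + 2 < n, y ≠ a ⟨i + 2, h⟩)) =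
      ({a ⟨i + 1, hj⟩, a ⟨i + 2, h2⟩} : Finset (Fin q))ᶜ := by
    ext x
    simp only [Finset.mem_filter, Finset.mem_univ, true_and, Finset.mem_compl,
      Finset.mem_insert, Finset.mem_singleton]
    constructor
    · rintro ⟨hA, hB⟩; push_neg; exact ⟨hA, hB h2⟩
    · intro h; push_neg at h; exact ⟨h.1, fun _ => h.2⟩
  have hI : (Finset.univ.filter (fun x : Fin q =>
      x ≠ a ⟨i, by omega⟩ ∧ ∀ h : 1 ≤ i, x ≠ a ⟨i - 1, by omega⟩)) ∩
      (Finset.univ.filter (fun y : Fin q =>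
      y ≠ a ⟨i + 1, hj⟩ ∧ ∀ h : i + 2 < n, y ≠ a ⟨i + 2, h⟩)) =
      ({a ⟨i - 1, hm⟩, a ⟨i, hi⟩, a ⟨i + 1, hj⟩, a ⟨i + 2, h2⟩} : Finset (Fin q))ᶜ := by
    rw [hX, hY]
    ext t
    simp only [Finset.mem_inter, Finset.mem_compl, Finset.mem_insert, Finset.mem_singleton]
    tauto
  rw [hI, hX, hY, compl_card_int, compl_card_int, compl_card_int,
    card2 _ _ (ane ha hm hi (by omega)), card2 _ _ (ane ha hj h2 (by omega)),
    card4 _ _ _ _ (ane ha hm hi (by omega)) (ane ha hi hj (by omega))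
      (ane ha hj h2 (by omega)),
    tval_eq' a (i := i) h1 hj hm hj rfl rfl,
    tval_eq' a (i := i + 1) (by omega) (by omega) hi h2 (by omega) (by omega),
    sval_eq' a (i := i) h1 h2 hm h2 rfl rfl]
  push_cast
  ring

lemma fib_adj_right {a : Fin n → Fin q} (ha : isHF a) {i : ℕ} (h1 : 1 ≤ i)
    (hin : i + 2 = n) :
    ((fib a i (i + 1)).card : ℤ) =
      ((q : ℤ) - 1) * ((q : ℤ) - 2) - ((q : ℤ) - 3 + tval a i) := by
  have hj : i + 1 < n := by omega
  have hi : i < n := by omega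
  have hm : i - 1 < n := by omega
  rw [fib_card_adj ha hj]
  have hX : (Finset.univ.filter (fun x : Fin q =>
      x ≠ a ⟨i, by omega⟩ ∧ ∀ h : 1 ≤ i, x ≠ a ⟨i - 1, by omega⟩)) =
      ({a ⟨i - 1, hm⟩, a ⟨i, hi⟩} : Finset (Fin q))ᶜ := by
    ext x
    simp only [Finset.mem_filter, Finset.mem_univ, true_and, Finset.mem_compl,
      Finset.mem_insert, Finset.mem_singleton]
    constructor
    · rintro ⟨hA, hB⟩; push_neg; exact ⟨hB h1, hA⟩
    · intro h; push_neg at h; exact ⟨h.2, fun _ => h.1⟩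
  have hY : (Finset.univ.filter (fun y : Fin q =>
      y ≠ a ⟨i + 1, hj⟩ ∧ ∀ h : i + 2 < n, y ≠ a ⟨i + 2, h⟩)) =
      ({a ⟨i + 1, hj⟩} : Finset (Fin q))ᶜ := by
    ext x
    simp only [Finset.mem_filter, Finset.mem_univ, true_and, Finset.mem_compl,
      Finset.mem_singleton]
    exact ⟨fun h => h.1, fun h => ⟨h, fun h' => absurd h' (by omega)⟩⟩
  have hI : (Finset.univ.filter (fun x : Fin q =>
      x ≠ a ⟨i, by omega⟩ ∧ ∀ h : 1 ≤ i, x ≠ a ⟨i - 1, by omega⟩)) ∩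
      (Finset.univ.filter (fun y : Fin q =>
      y ≠ a ⟨i + 1, hj⟩ ∧ ∀ h : i + 2 < n, y ≠ a ⟨i + 2, h⟩)) =
      ({a ⟨i - 1, hm⟩, a ⟨i, hi⟩, a ⟨i + 1, hj⟩} : Finset (Fin q))ᶜ := by
    rw [hX, hY]
    ext t
    simp only [Finset.mem_inter, Finset.mem_compl, Finset.mem_insert, Finset.mem_singleton]
    tauto
  rw [hI, hX, hY, compl_card_int, compl_card_int, compl_card_int,
    Finset.card_singleton, card2 _ _ (ane ha hm hi (by omega)),
    card3 _ _ _ (ane ha hm hi (by omega)) (ane ha hi hj (by omega)),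
    tval_eq' a (i := i) h1 hj hm hj rfl rfl]
  push_cast
  ring

end AdjCases

section Sums

lemma sum_Icc_eq_range (f : ℕ → ℤ) (c k : ℕ) :
    ∑ i ∈ Finset.Icc c (k + c), f i = ∑ i ∈ Finset.range (k + 1), f (i + c) := by
  induction k with
  | zero => simp
  | succ k ih =>
    rw [show k + 1 + c = (k + c) + 1 by omega, Finset.sum_Icc_succ_top (by omega), ih,
      Finset.sum_range_succ (f := fun i => f (i + c)) (n := k + 1),
      show k + c + 1 = k + 1 + c by omega]

lemma sum_Ico_eq_range' (f : ℕ → ℤ) (c k : ℕ) :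
    ∑ i ∈ Finset.Ico c (k + c), f i = ∑ i ∈ Finset.range k, f (i + c) := by
  rw [Finset.sum_Ico_eq_sum_range, show k + c - c = k by omega]
  exact Finset.sum_congr rfl fun i _ => by rw [Nat.add_comm]

lemma pad_top (g : ℕ → ℤ) (m : ℕ) (h : g m = 0) :
    ∑ i ∈ Finset.Icc 1 m, g i = ∑ i ∈ Finset.Icc 1 (m - 1), g i := by
  rcases m with _ | k
  · rfl
  · rw [Finset.sum_Icc_succ_top (by omega), h, add_zero]
    rfl

end Sums

section Agg
variable {q m : ℕ}

lemma adj_sum (a : Fin (m + 3) → Fin q) (ha : isHF a) :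
    ∑ i ∈ Finset.range (m + 2), ((fib a i (i + 1)).card : ℤ)
      = (((q : ℤ) - 1) * ((q : ℤ) - 2) - ((q : ℤ) - 3 + tval a 1))
        + (((q : ℤ) - 1) * ((q : ℤ) - 2) - ((q : ℤ) - 3 + tval a (m + 1)))
        + ∑ i ∈ Finset.range m, (((q : ℤ) - 2) * ((q : ℤ) - 2)
            - ((q : ℤ) - 4 + tval a (i + 1) + tval a (i + 2) + sval a (i + 1))) := by
  rw [show Finset.range (m + 2) = Finset.range ((m + 1) + 1) from rfl,
    Finset.sum_range_succ, Finset.sum_range_succ']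
  have hmid : ∀ i ∈ Finset.range m,
      ((fib a (i + 1) (i + 1 + 1)).card : ℤ) = ((q : ℤ) - 2) * ((q : ℤ) - 2)
        - ((q : ℤ) - 4 + tval a (i + 1) + tval a (i + 2) + sval a (i + 1)) := by
    intro i hi
    simp only [Finset.mem_range] at hi
    exact fib_adj_mid ha (by omega) (by omega)
  rw [Finset.sum_congr rfl hmid, fib_adj_left ha (by omega)]
  have hright : ((fib a (m + 1) (m + 1 + 1)).card : ℤ)
      = ((q : ℤ) - 1) * ((q : ℤ) - 2) - ((q : ℤ) - 3 + tval a (m + 1)) :=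
    fib_adj_right ha (by omega) (by omega)
  rw [hright]
  have h01 : tval a (0 + 1) = tval a 1 := rfl
  rw [h01]
  ring

end Agg

section Agg2
variable {q m : ℕ}

lemma nonadj_sum (a : Fin (m + 3) → Fin q) (ha : isHF a) :
    ∑ i ∈ Finset.range (m + 2), ∑ j ∈ Finset.Ico (i + 2) (m + 3), ((fib a i j).card : ℤ)
      = ((q : ℤ) - 2) * ((∑ j ∈ Finset.range m, ((q : ℤ) - 3 + tval a (j + 2))) + ((q : ℤ) - 2))
        + ∑ i ∈ Finset.range m, (((q : ℤ) - 3 + tval a (i + 1)) *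
            ((∑ j ∈ Finset.Ico (i + 3) (m + 2), ((q : ℤ) - 3 + tval a j)) + ((q : ℤ) - 2))) := by
  have key : ∀ i, i < m + 1 →
      (∑ j ∈ Finset.Ico (i + 2) (m + 3), ((fib a i j).card : ℤ))
        = ((cset a i).card : ℤ) *
            ((∑ j ∈ Finset.Ico (i + 2) (m + 2), ((cset a j).card : ℤ)) + ((q : ℤ) - 2)) := by
    intro i hi
    have step1 : ∀ j ∈ Finset.Ico (i + 2) (m + 3), ((fib a i j).card : ℤ)
        = ((cset a i).card : ℤ) * ((cset a j).card : ℤ) := by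
      intro j hj
      simp only [Finset.mem_Ico] at hj
      exact fib_card_nonadj ha hj.1 hj.2
    rw [Finset.sum_congr rfl step1, ← Finset.mul_sum]
    congr 1
    rw [show Finset.Ico (i + 2) (m + 3) = Finset.Ico (i + 2) ((m + 2) + 1) from rfl,
      Finset.sum_Ico_succ_top (by omega)]
    congr 1
    exact cset_card_last (n := m + 3) ha (by omega)
  have hmidc : ∀ i, 1 ≤ i → i + 1 < m + 3 →
      (∑ j ∈ Finset.Ico (i + 2) (m + 2), ((cset a j).card : ℤ))
        = ∑ j ∈ Finset.Ico (i + 2) (m + 2), ((q : ℤ) - 3 + tval a j) := by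
    intro i h1 h2
    refine Finset.sum_congr rfl fun j hj => ?_
    simp only [Finset.mem_Ico] at hj
    exact cset_card_mid ha (by omega) (by omega)
  rw [show Finset.range (m + 2) = Finset.range ((m + 1) + 1) from rfl,
    Finset.sum_range_succ, Finset.sum_range_succ']
  have htop : (∑ j ∈ Finset.Ico (m + 1 + 2) (m + 3), ((fib a (m + 1) j).card : ℤ)) = 0 := by
    have he : Finset.Ico (m + 1 + 2) (m + 3) = (∅ : Finset ℕ) := Finset.Ico_self (m + 3)
    rw [he, Finset.sum_empty]
  rw [htop, add_zero]
  have hg0 : (∑ j ∈ Finset.Ico (0 + 2) (m + 3), ((fib a 0 j).card : ℤ))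
      = ((q : ℤ) - 2) * ((∑ j ∈ Finset.range m, ((q : ℤ) - 3 + tval a (j + 2))) + ((q : ℤ) - 2)) := by
    rw [key 0 (by omega), cset_card_zero ha (by omega)]
    congr 1
    congr 1
    have : (∑ j ∈ Finset.Ico (0 + 2) (m + 2), ((cset a j).card : ℤ))
        = ∑ j ∈ Finset.Ico 2 (m + 2), ((q : ℤ) - 3 + tval a j) := by
      rw [show Finset.Ico (0 + 2) (m + 2) = Finset.Ico 2 (m + 2) from rfl]
      refine Finset.sum_congr rfl fun j hj => ?_
      simp only [Finset.mem_Ico] at hj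
      exact cset_card_mid ha (by omega) (by omega)
    rw [this, sum_Ico_eq_range' (fun j => ((q : ℤ) - 3 + tval a j)) 2 m]
  rw [hg0]
  have hgmid : ∀ i ∈ Finset.range m,
      (∑ j ∈ Finset.Ico (i + 1 + 2) (m + 3), ((fib a (i + 1) j).card : ℤ))
        = ((q : ℤ) - 3 + tval a (i + 1)) *
            ((∑ j ∈ Finset.Ico (i + 3) (m + 2), ((q : ℤ) - 3 + tval a j)) + ((q : ℤ) - 2)) := by
    intro i hi
    simp only [Finset.mem_range] at hi
    rw [key (i + 1) (by omega), cset_card_mid ha (by omega) (by omega),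
      hmidc (i + 1) (by omega) (by omega)]
  rw [Finset.sum_congr rfl hgmid]
  ring

end Agg2

section Total
variable {q m : ℕ}

lemma total_split (a : Fin (m + 3) → Fin q) (ha : isHF a) :
    ((HFsphere a 2).card : ℤ)
      = (∑ i ∈ Finset.range (m + 2), ((fib a i (i + 1)).card : ℤ))
        + ∑ i ∈ Finset.range (m + 2), ∑ j ∈ Finset.Ico (i + 2) (m + 3), ((fib a i j).card : ℤ) := by
  rw [sphere_card_eq a]
  rw [show Finset.range (m + 3) = Finset.range ((m + 2) + 1) from rfl, Finset.sum_range_succ]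
  have htop : (∑ j ∈ Finset.Ico (m + 2 + 1) (m + 3), ((fib a (m + 2) j).card : ℤ)) = 0 := by
    have he : Finset.Ico (m + 2 + 1) (m + 3) = (∅ : Finset ℕ) := Finset.Ico_self (m + 3)
    rw [he, Finset.sum_empty]
  rw [htop, add_zero]
  have hsplit : ∀ i ∈ Finset.range (m + 2),
      (∑ j ∈ Finset.Ico (i + 1) (m + 3), ((fib a i j).card : ℤ))
        = ((fib a i (i + 1)).card : ℤ)
          + ∑ j ∈ Finset.Ico (i + 2) (m + 3), ((fib a i j).card : ℤ) := by
    intro i hi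
    simp only [Finset.mem_range] at hi
    rw [Finset.sum_eq_sum_Ico_succ_bot (by omega)]
  rw [Finset.sum_congr rfl hsplit, Finset.sum_add_distrib]

end Total

section MoreSums

lemma sum_Icc_one (f : ℕ → ℤ) (M : ℕ) :
    ∑ i ∈ Finset.Icc 1 M, f i = ∑ i ∈ Finset.range M, f (i + 1) := by
  induction M with
  | zero => simp
  | succ k ih => rw [Finset.sum_Icc_succ_top (by omega), ih, Finset.sum_range_succ]

lemma sum_Icc_two' (f : ℕ → ℤ) (k : ℕ) :
    ∑ i ∈ Finset.Icc 2 (k + 1), f i = ∑ i ∈ Finset.range k, f (i + 2) := by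
  induction k with
  | zero => rw [Finset.Icc_eq_empty (by omega)]; simp
  | succ k ih => rw [Finset.sum_Icc_succ_top (by omega), ih, Finset.sum_range_succ]

lemma dbl_sum (f : ℕ → ℤ) (m : ℕ) :
    ∑ i ∈ Finset.Icc 1 (m - 1), f i * (∑ j ∈ Finset.Icc (i + 2) (m + 1), f j)
      = ∑ i ∈ Finset.range m, f (i + 1) * (∑ j ∈ Finset.Ico (i + 3) (m + 2), f j) := by
  have h1 : ∀ i : ℕ, Finset.Icc (i + 2) (m + 1) = Finset.Ico (i + 2) (m + 2) :=
    fun i => (Finset.Ico_add_one_right_eq_Icc (i + 2) (m + 1)).symm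
  have h2 : (∑ i ∈ Finset.Icc 1 m, f i * (∑ j ∈ Finset.Ico (i + 2) (m + 2), f j))
      = ∑ i ∈ Finset.Icc 1 (m - 1), f i * (∑ j ∈ Finset.Ico (i + 2) (m + 2), f j) := by
    refine pad_top _ m ?_
    have he : Finset.Ico (m + 2) (m + 2) = (∅ : Finset ℕ) := Finset.Ico_self (m + 2)
    rw [he, Finset.sum_empty, mul_zero]
  calc ∑ i ∈ Finset.Icc 1 (m - 1), f i * (∑ j ∈ Finset.Icc (i + 2) (m + 1), f j)
      = ∑ i ∈ Finset.Icc 1 (m - 1), f i * (∑ j ∈ Finset.Ico (i + 2) (m + 2), f j) := by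
        exact Finset.sum_congr rfl fun i _ => by rw [h1 i]
    _ = ∑ i ∈ Finset.Icc 1 m, f i * (∑ j ∈ Finset.Ico (i + 2) (m + 2), f j) := h2.symm
    _ = ∑ i ∈ Finset.range m, f (i + 1) * (∑ j ∈ Finset.Ico (i + 1 + 2) (m + 2), f j) :=
        sum_Icc_one _ m
    _ = ∑ i ∈ Finset.range m, f (i + 1) * (∑ j ∈ Finset.Ico (i + 3) (m + 2), f j) :=
        Finset.sum_congr rfl fun i _ => rfl

lemma sum_split_const (c : ℤ) (g : ℕ → ℤ) (m : ℕ) :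
    ∑ i ∈ Finset.range m, (c + g i) = (m : ℤ) * c + ∑ i ∈ Finset.range m, g i := by
  rw [Finset.sum_add_distrib, Finset.sum_const, Finset.card_range, nsmul_eq_mul]

end MoreSums

theorem stmt_6 (q n : ℕ) (hq : 2 ≤ q) (hn : 3 ≤ n)
    (a : Fin n → Fin q) (ha : a ∈ HFset q n) :
    ((HFsphere a 2).card : ℤ) =
      3 * ((q : ℤ) - 2) ^ 2 + 2
        + ((n : ℤ) - 3) * (((q : ℤ) - 2) * ((q : ℤ) - 3) + 2)
        - 2 * (∑ i ∈ Finset.Icc 1 (n - 2), tval a i)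
        - (∑ i ∈ Finset.Icc 1 (n - 3), sval a i)
        + ((q : ℤ) - 2) *
            ((∑ i ∈ Finset.Icc 2 (n - 2), ((q : ℤ) - 3 + tval a i))
              + (∑ i ∈ Finset.Icc 1 (n - 3), ((q : ℤ) - 3 + tval a i)))
        + ∑ i ∈ Finset.Icc 1 (n - 4),
            (((q : ℤ) - 3 + tval a i) *
              ∑ j ∈ Finset.Icc (i + 2) (n - 2), ((q : ℤ) - 3 + tval a j)) := by
  have haHF : isHF a := by simpa [HFset] using ha
  obtain ⟨m, rfl⟩ : ∃ m, n = m + 3 := ⟨n - 3, by omega⟩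
  rw [show m + 3 - 2 = m + 1 by omega, show m + 3 - 3 = m by omega,
    show m + 3 - 4 = m - 1 by omega]
  rw [total_split a haHF, adj_sum a haHF, nonadj_sum a haHF]
  rw [dbl_sum (fun i => (q : ℤ) - 3 + tval a i) m]
  rw [sum_Icc_one (fun i => tval a i) (m + 1)]
  rw [sum_Icc_one (fun i => sval a i) m]
  rw [sum_Icc_two' (fun i => (q : ℤ) - 3 + tval a i) m]
  rw [sum_Icc_one (fun i => (q : ℤ) - 3 + tval a i) m]
  -- distribute the middle product sum on the LHS
  have hdist : ∑ i ∈ Finset.range m, (((q : ℤ) - 3 + tval a (i + 1)) *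
      ((∑ j ∈ Finset.Ico (i + 3) (m + 2), ((q : ℤ) - 3 + tval a j)) + ((q : ℤ) - 2)))
      = (∑ i ∈ Finset.range m, (((q : ℤ) - 3 + tval a (i + 1)) *
          (∑ j ∈ Finset.Ico (i + 3) (m + 2), ((q : ℤ) - 3 + tval a j))))
        + ((q : ℤ) - 2) * ∑ i ∈ Finset.range m, ((q : ℤ) - 3 + tval a (i + 1)) := by
    rw [Finset.mul_sum, ← Finset.sum_add_distrib]
    exact Finset.sum_congr rfl fun i _ => by ring
  rw [hdist]
  -- split composite sums into constant and indicator parts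
  rw [sum_split_const ((q : ℤ) - 3) (fun i => tval a (i + 1)) m,
    sum_split_const ((q : ℤ) - 3) (fun i => tval a (i + 2)) m]
  -- split the adjacent middle sum
  have hadj : ∑ i ∈ Finset.range m, (((q : ℤ) - 2) * ((q : ℤ) - 2)
      - ((q : ℤ) - 4 + tval a (i + 1) + tval a (i + 2) + sval a (i + 1)))
      = (m : ℤ) * (((q : ℤ) - 2) * ((q : ℤ) - 2) - ((q : ℤ) - 4))
        - (∑ i ∈ Finset.range m, tval a (i + 1))
        - (∑ i ∈ Finset.range m, tval a (i + 2))
        - (∑ i ∈ Finset.range m, sval a (i + 1)) := by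
    rw [Finset.sum_sub_distrib, Finset.sum_add_distrib, Finset.sum_add_distrib,
      Finset.sum_add_distrib, Finset.sum_const, Finset.card_range, nsmul_eq_mul,
      Finset.sum_const, Finset.card_range, nsmul_eq_mul]
    ring
  rw [hadj]
  have h1 : ∑ i ∈ Finset.range (m + 1), tval a (i + 1)
      = (∑ i ∈ Finset.range m, tval a (i + 1)) + tval a (m + 1) :=
    Finset.sum_range_succ _ m
  have h2 : ∑ i ∈ Finset.range (m + 1), tval a (i + 1)
      = (∑ i ∈ Finset.range m, tval a (i + 2)) + tval a 1 := by
    rw [Finset.sum_range_succ']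
  have hrel : (∑ i ∈ Finset.range m, tval a (i + 1)) + tval a (m + 1)
      = tval a 1 + ∑ i ∈ Finset.range m, tval a (i + 2) := by
    rw [← h1, h2]; ring
  push_cast
  linear_combination hrel + 2 * h1
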